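/- Fix integers $n \geq 1$, $s \geq 2$, $0 \leq k \leq n$, and a reference assignment $(f^1, \dots, f^n)$ of the $s$-dimensional MAP of size $n$ with $f^i_1 = i$. Let $h(n,k)$ be the number of assignments $(e^1, \dots, e^n)$ with $e^i_1 = i$ for all $i$, $e^j = f^j$ for all $j \leq k$, and $e^j \neq f^j$ for all $j > k$. Then $h(n,k) \leq ((n-k)!)^{s-1}$ and $h(n,k) \geq ((n-k)!)^{s-1} - (n-k) \cdot ((n-k-1)!)^{s-1}$. -/

import Mathlib

/-- The set counted by `h(n,k)`: assignments `e` of the `s`-dimensional MAP of size `n` (with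
first coordinates fixed to the identity) that coincide with the reference assignment `f` on
the first `k` vectors and differ from it on every later vector. -/
def hSet (n s k : ℕ) (f : Fin n → Fin s → Fin n) : Set (Fin n → Fin s → Fin n) :=
  {e | (∀ i : Fin n, ∀ j : Fin s, (j : ℕ) = 0 → e i j = i) ∧
       (∀ j : Fin s, Function.Injective (fun i => e i j)) ∧
       (∀ i : Fin n, (i : ℕ) < k → e i = f i) ∧
       (∀ i : Fin n, k ≤ (i : ℕ) → e i ≠ f i)}

open Function Finset

section aux
variable {n : ℕ}

/-- Number of injective self-maps of `Fin n` extending a given injective map on a finset. -/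
lemma card_inj_extend (S : Finset (Fin n)) (c : Fin n → Fin n)
    (hc : Function.Injective c) :
    Nat.card {g : Fin n → Fin n // Function.Injective g ∧ ∀ i ∈ S, g i = c i} =
      Nat.factorial (n - S.card) := by
  classical
  set T : Finset (Fin n) := S.image c with hT
  have hTcard : T.card = S.card := Finset.card_image_of_injective _ hc
  set A := {g : Fin n → Fin n // Function.Injective g ∧ ∀ i ∈ S, g i = c i}
  set E := ({i : Fin n // i ∉ S} ≃ {j : Fin n // j ∉ T})
  have key : ∀ (g : Fin n → Fin n), Function.Injective g → (∀ i ∈ S, g i = c i) →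
      ∀ i : Fin n, i ∉ S → g i ∉ T := by
    intro g hg hgS i hi hgi
    obtain ⟨i', hi', hci'⟩ := Finset.mem_image.mp hgi
    have : g i' = g i := by rw [hgS i' hi', hci']
    exact hi (hg this ▸ hi')
  have Fdef : ∀ a : A, Function.Bijective
      (fun x : {i : Fin n // i ∉ S} => (⟨a.1 x.1, key a.1 a.2.1 a.2.2 x.1 x.2⟩ : {j : Fin n // j ∉ T})) := by
    intro a
    constructor
    · intro x y hxy
      exact Subtype.ext (a.2.1 (congrArg Subtype.val hxy))
    · rintro ⟨y, hy⟩
      have hbij : Function.Bijective a.1 := Finite.injective_iff_bijective.mp a.2.1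
      obtain ⟨i, hi⟩ := hbij.2 y
      refine ⟨⟨i, fun hiS => hy ?_⟩, Subtype.ext hi⟩
      rw [← hi, a.2.2 i hiS]
      exact Finset.mem_image_of_mem c hiS
  let F : A → E := fun a => Equiv.ofBijective _ (Fdef a)
  have hF : Function.Injective F := by
    intro a b hab
    refine Subtype.ext (funext fun i => ?_)
    by_cases hi : i ∈ S
    · rw [a.2.2 i hi, b.2.2 i hi]
    · have := congrArg (fun (e : E) => (e ⟨i, hi⟩ : Fin n)) hab
      exact this
  let G : E → A := fun σ =>
    ⟨fun i => if h : i ∈ S then c i else (σ ⟨i, h⟩).1, by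
      intro i i' h
      simp only at h
      by_cases hi : i ∈ S <;> by_cases hi' : i' ∈ S
      · rw [dif_pos hi, dif_pos hi'] at h; exact hc h
      · rw [dif_pos hi, dif_neg hi'] at h
        exact absurd (h ▸ Finset.mem_image_of_mem c hi) (σ ⟨i', hi'⟩).2
      · rw [dif_neg hi, dif_pos hi'] at h
        exact absurd (h ▸ Finset.mem_image_of_mem c hi') (σ ⟨i, hi⟩).2
      · rw [dif_neg hi, dif_neg hi'] at h
        have := σ.injective (Subtype.ext h)
        exact congrArg Subtype.val this, by
      intro i hi; exact dif_pos hi⟩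
  have hG : Function.Injective G := by
    intro σ τ h
    refine Equiv.ext fun x => ?_
    have := congrFun (congrArg Subtype.val h) x.1
    simp only [G, dif_neg x.2, Subtype.coe_eta] at this
    exact Subtype.ext this
  have hcard : Nat.card A = Nat.card E :=
    le_antisymm (Nat.card_le_card_of_injective F hF) (Nat.card_le_card_of_injective G hG)
  rw [hcard]
  rw [Nat.card_eq_fintype_card]
  have h1 : Fintype.card {i : Fin n // i ∉ S} = n - S.card := by
    simp [Fintype.card_subtype_compl]
  have h2 : Fintype.card {j : Fin n // j ∉ T} = n - S.card := by
    simp [Fintype.card_subtype_compl, hTcard]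
  have e : {i : Fin n // i ∉ S} ≃ {j : Fin n // j ∉ T} :=
    Fintype.equivOfCardEq (h1.trans h2.symm)
  rw [Fintype.card_equiv e, h1]

end aux

open Function Finset

section aux2
variable {n s : ℕ}

lemma card_dim_subtype (hs : 1 ≤ s) :
    Fintype.card {j : Fin s // (j : ℕ) ≠ 0} = s - 1 := by
  classical
  have h1 : Fintype.card {j : Fin s // (j : ℕ) = 0} = 1 := by
    rw [Fintype.card_eq_one_iff]
    refine ⟨⟨⟨0, hs⟩, rfl⟩, fun b => Subtype.ext (Fin.ext b.2)⟩
  have := Fintype.card_subtype_compl (fun j : Fin s => (j : ℕ) = 0)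
  rw [this, h1, Fintype.card_fin]

/-- The count of partial assignments fixed on a finset `S`. -/
lemma card_assign (hs : 1 ≤ s) (S : Finset (Fin n)) (f : Fin n → Fin s → Fin n)
    (hf1 : ∀ i : Fin n, ∀ j : Fin s, (j : ℕ) = 0 → f i j = i)
    (hf2 : ∀ j : Fin s, Function.Injective (fun i => f i j)) :
    Nat.card {e : Fin n → Fin s → Fin n //
      (∀ i : Fin n, ∀ j : Fin s, (j : ℕ) = 0 → e i j = i) ∧
      (∀ j : Fin s, Function.Injective (fun i => e i j)) ∧
      (∀ i ∈ S, e i = f i)} = Nat.factorial (n - S.card) ^ (s - 1) := by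
  classical
  set A := {e : Fin n → Fin s → Fin n //
      (∀ i : Fin n, ∀ j : Fin s, (j : ℕ) = 0 → e i j = i) ∧
      (∀ j : Fin s, Function.Injective (fun i => e i j)) ∧
      (∀ i ∈ S, e i = f i)} with hA
  set P := ∀ _j : {j : Fin s // (j : ℕ) ≠ 0},
      {g : Fin n → Fin n // Function.Injective g ∧ ∀ i ∈ S, g i = f i _j.1} with hP
  let F : A → P := fun a j =>
    ⟨fun i => a.1 i j.1, a.2.2.1 j.1, fun i hi => congrFun (a.2.2.2 i hi) j.1⟩
  have hF : Function.Injective F := by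
    intro a b hab
    refine Subtype.ext (funext fun i => funext fun j => ?_)
    by_cases h : (j : ℕ) = 0
    · rw [a.2.1 i j h, b.2.1 i j h]
    · exact congrFun (congrArg Subtype.val (congrFun hab ⟨j, h⟩)) i
  let G : P → A := fun p =>
    ⟨fun i j => if h : (j : ℕ) = 0 then i else (p ⟨j, h⟩).1 i, by
      intro i j h; exact dif_pos h, by
      intro j i i' h
      simp only at h
      by_cases hj : (j : ℕ) = 0
      · rw [dif_pos hj, dif_pos hj] at h; exact h
      · rw [dif_neg hj, dif_neg hj] at h; exact (p ⟨j, hj⟩).2.1 h, by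
      intro i hi
      funext j
      show (if h : (j : ℕ) = 0 then i else (p ⟨j, h⟩).1 i) = f i j
      by_cases hj : (j : ℕ) = 0
      · rw [dif_pos hj, hf1 i j hj]
      · rw [dif_neg hj]; exact (p ⟨j, hj⟩).2.2 i hi⟩
  have hG : Function.Injective G := by
    intro p q h
    funext j
    refine Subtype.ext (funext fun i => ?_)
    have := congrFun (congrFun (congrArg Subtype.val h) i) j.1
    simpa only [G, dif_neg j.2, Subtype.coe_eta] using this
  have hcard : Nat.card A = Nat.card P :=
    le_antisymm (Nat.card_le_card_of_injective F hF) (Nat.card_le_card_of_injective G hG)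
  rw [hcard, hP, Nat.card_pi]
  have : ∀ j : {j : Fin s // (j : ℕ) ≠ 0},
      Nat.card {g : Fin n → Fin n // Function.Injective g ∧ ∀ i ∈ S, g i = f i j.1} =
        Nat.factorial (n - S.card) := fun j => card_inj_extend S (fun i => f i j.1) (hf2 j.1)
  rw [Finset.prod_congr rfl (fun j _ => this j), Finset.prod_const, Finset.card_univ,
    card_dim_subtype hs]

end aux2

/-- Bounds on `h(n,k)`:
`((n-k)!)^(s-1) - (n-k)((n-k-1)!)^(s-1) ≤ h(n,k) ≤ ((n-k)!)^(s-1)`. -/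
theorem hnk_bounds (n s k : ℕ) (hn : 1 ≤ n) (hs : 2 ≤ s) (hk : k ≤ n)
    (f : Fin n → Fin s → Fin n)
    (hf1 : ∀ i : Fin n, ∀ j : Fin s, (j : ℕ) = 0 → f i j = i)
    (hf2 : ∀ j : Fin s, Function.Injective (fun i => f i j)) :
    Nat.card ↥(hSet n s k f) ≤ Nat.factorial (n - k) ^ (s - 1) ∧
    (Nat.factorial (n - k) : ℤ) ^ (s - 1) -
        ((n : ℤ) - (k : ℤ)) * (Nat.factorial (n - k - 1) : ℤ) ^ (s - 1) ≤
      (Nat.card ↥(hSet n s k f) : ℤ) := by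
  classical
  have hs1 : 1 ≤ s := le_trans (by norm_num) hs
  set Sk : Finset (Fin n) := Finset.univ.filter (fun i : Fin n => (i : ℕ) < k) with hSk
  have hmemSk : ∀ i : Fin n, i ∈ Sk ↔ (i : ℕ) < k := by
    intro i; simp [hSk]
  have hSkcard : Sk.card = k := by
    have himg : Sk.image Fin.val = Finset.range k := by
      ext m
      simp only [Finset.mem_image, hSk, Finset.mem_filter, Finset.mem_univ, true_and,
        Finset.mem_range]
      constructor
      · rintro ⟨a, ha, rfl⟩; exact ha
      · intro hm; exact ⟨⟨m, lt_of_lt_of_le hm hk⟩, hm, rfl⟩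
    rw [← Finset.card_image_of_injective Sk Fin.val_injective, himg, Finset.card_range]
  set PA := {e : Fin n → Fin s → Fin n //
      (∀ i : Fin n, ∀ j : Fin s, (j : ℕ) = 0 → e i j = i) ∧
      (∀ j : Fin s, Function.Injective (fun i => e i j)) ∧
      (∀ i ∈ Sk, e i = f i)} with hPA
  have hPAcard : Nat.card PA = Nat.factorial (n - k) ^ (s - 1) := by
    rw [hPA, card_assign hs1 Sk f hf1 hf2, hSkcard]
  set B : Fin n → Type := fun i₀ => {e : Fin n → Fin s → Fin n //
      (∀ i : Fin n, ∀ j : Fin s, (j : ℕ) = 0 → e i j = i) ∧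
      (∀ j : Fin s, Function.Injective (fun i => e i j)) ∧
      (∀ i ∈ insert i₀ Sk, e i = f i)} with hB
  have hBcard : ∀ i₀ : Fin n, k ≤ (i₀ : ℕ) →
      Nat.card (B i₀) = Nat.factorial (n - k - 1) ^ (s - 1) := by
    intro i₀ hi₀
    rw [hB]
    rw [card_assign hs1 (insert i₀ Sk) f hf1 hf2]
    rw [Finset.card_insert_of_notMem (by simp [hmemSk, Nat.not_lt.mpr hi₀])]
    rw [hSkcard, ← Nat.sub_sub]
  -- upper bound
  have hupper : Nat.card ↥(hSet n s k f) ≤ Nat.card PA := by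
    apply Nat.card_le_card_of_injective (fun e =>
      (⟨e.1, e.2.1, e.2.2.1, fun i hi => e.2.2.2.1 i ((hmemSk i).1 hi)⟩ : PA))
    intro a b hab
    simp only at hab
    have h3 := congrArg Subtype.val hab
    exact Subtype.ext h3
  -- lower bound
  have hlower : Nat.card PA ≤
      Nat.card ↥(hSet n s k f) +
        Nat.card (Σ i₀ : {i : Fin n // k ≤ (i : ℕ)}, B i₀.1) := by
    rw [← Nat.card_sum]
    have hexists : ∀ e : PA, ¬(∀ i : Fin n, k ≤ (i : ℕ) → e.1 i ≠ f i) →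
        ∃ i : Fin n, k ≤ (i : ℕ) ∧ e.1 i = f i := by
      intro e h; push_neg at h; exact h
    refine Nat.card_le_card_of_injective (fun e =>
      if he : ∀ i : Fin n, k ≤ (i : ℕ) → e.1 i ≠ f i then
        Sum.inl ⟨e.1, e.2.1, e.2.2.1, fun i hi => e.2.2.2 i ((hmemSk i).2 hi), he⟩
      else
        Sum.inr ⟨⟨(hexists e he).choose, (hexists e he).choose_spec.1⟩,
          ⟨e.1, e.2.1, e.2.2.1, fun i hi => by
            rcases Finset.mem_insert.mp hi with h | h
            · rw [h]; exact (hexists e he).choose_spec.2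
            · exact e.2.2.2 i h⟩⟩) ?_
    intro a b hab
    simp only at hab
    by_cases ha : ∀ i : Fin n, k ≤ (i : ℕ) → a.1 i ≠ f i <;>
      by_cases hb : ∀ i : Fin n, k ≤ (i : ℕ) → b.1 i ≠ f i
    · rw [dif_pos ha, dif_pos hb] at hab
      have h2 := Sum.inl.inj hab
      have h3 := congrArg Subtype.val h2
      exact Subtype.ext h3
    · rw [dif_pos ha, dif_neg hb] at hab; exact absurd hab (by simp)
    · rw [dif_neg ha, dif_pos hb] at hab; exact absurd hab (by simp)
    · rw [dif_neg ha, dif_neg hb] at hab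
      have h2 := Sum.inr.inj hab
      have h3 := congrArg
        (fun z : (Σ i₀ : {i : Fin n // k ≤ (i : ℕ)}, B i₀.1) => (z.2).1) h2
      exact Subtype.ext h3
  -- cardinality of the sigma type
  have h5 : Fintype.card {i : Fin n // k ≤ (i : ℕ)} = n - k := by
    rw [Fintype.card_subtype]
    have himg : ((Finset.univ.filter (fun i : Fin n => k ≤ (i : ℕ))).image Fin.val) =
        Finset.Ico k n := by
      ext m
      simp only [Finset.mem_image, Finset.mem_filter, Finset.mem_univ, true_and,
        Finset.mem_Ico]
      constructor
      · rintro ⟨a, ha, rfl⟩; exact ⟨ha, a.2⟩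
      · rintro ⟨h1, h2⟩; exact ⟨⟨m, h2⟩, h1, rfl⟩
    rw [← Finset.card_image_of_injective _ Fin.val_injective, himg, Nat.card_Ico]
  have hsig : Nat.card (Σ i₀ : {i : Fin n // k ≤ (i : ℕ)}, B i₀.1) =
      (n - k) * Nat.factorial (n - k - 1) ^ (s - 1) := by
    rw [Nat.card_eq_fintype_card, Fintype.card_sigma]
    have hc : ∀ i₀ : {i : Fin n // k ≤ (i : ℕ)},
        Fintype.card (B i₀.1) = Nat.factorial (n - k - 1) ^ (s - 1) := by
      intro i₀; rw [← Nat.card_eq_fintype_card]; exact hBcard i₀.1 i₀.2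
    rw [Finset.sum_congr rfl fun i _ => hc i, Finset.sum_const, Finset.card_univ,
      smul_eq_mul, h5]
  constructor
  · exact hPAcard ▸ hupper
  · have hmain : Nat.factorial (n - k) ^ (s - 1) ≤
        Nat.card ↥(hSet n s k f) + (n - k) * Nat.factorial (n - k - 1) ^ (s - 1) := by
      rw [← hPAcard, ← hsig]; exact hlower
    have h3 : (Nat.factorial (n - k) : ℤ) ^ (s - 1) ≤
        (Nat.card ↥(hSet n s k f) : ℤ) +
          ((n - k : ℕ) : ℤ) * (Nat.factorial (n - k - 1) : ℤ) ^ (s - 1) := by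
      exact_mod_cast hmain
    rw [show (n : ℤ) - (k : ℤ) = ((n - k : ℕ) : ℤ) by rw [Nat.cast_sub hk]]
    linarith
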